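/- Let c, α₁, ψ₀ be real constants with c ≠ 0 and set C(t) = e^{ψ₀t}. On ℝ⁴ with coordinates (t,x,y,z), define the Bianchi I metric g = diag(−C(t)², C(t)²e^{−2t/c}, C(t)²e^{−2α₁t/c}, C(t)²). Then the vector field X₁ = (c, x, α₁y, 0) is a homothetic Killing vector of g: it satisfies the conformal Killing equation Σ_λ [ξ^λ ∂_λ g_{μν} + g_{λν} ∂_μ ξ^λ + g_{μλ} ∂_ν ξ^λ] = 2ψ g_{μν} with the constant conformal factor ψ = c·ψ₀. -/

import Mathlib

noncomputable section

/-- Partial derivative of `f` in the `μ`-th coordinate direction at `p`. -/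
def pd (μ : Fin 4) (f : (Fin 4 → ℝ) → ℝ) (p : Fin 4 → ℝ) : ℝ :=
  fderiv ℝ f p (Pi.single μ 1)

lemma pd_const (μ : Fin 4) (a : ℝ) (p : Fin 4 → ℝ) : pd μ (fun _ => a) p = 0 := by
  simp [pd]

lemma pd_comp (μ i : Fin 4) {f : ℝ → ℝ} {f' : ℝ} {p : Fin 4 → ℝ}
    (h : HasDerivAt f f' (p i)) :
    pd μ (fun q => f (q i)) p = (if μ = i then 1 else 0) * f' := by
  have h1 := (ContinuousLinearMap.proj (R := ℝ) (φ := fun _ : Fin 4 => ℝ) i).hasFDerivAt (x := p)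
  have h2 := h.hasFDerivAt.comp p h1
  have h3 : fderiv ℝ (fun q : Fin 4 → ℝ => f (q i)) p
      = ((1 : ℝ →L[ℝ] ℝ).smulRight f').comp (ContinuousLinearMap.proj i) := h2.fderiv
  rw [pd, h3]
  simp [Pi.single_apply, mul_comm, eq_comm]

lemma pd_coord (μ i : Fin 4) (p : Fin 4 → ℝ) :
    pd μ (fun q => q i) p = (if μ = i then 1 else 0) := by
  simpa using pd_comp μ i (hasDerivAt_id (p i))

lemma pd_cmul (μ i : Fin 4) (a : ℝ) (p : Fin 4 → ℝ) :
    pd μ (fun q => a * q i) p = (if μ = i then 1 else 0) * a := by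
  simpa using pd_comp μ i ((hasDerivAt_id (p i)).const_mul a)

/-- `ξ` is a conformal Killing vector of the metric `g` with conformal factor `ψ`. -/
def IsCKV (g : (Fin 4 → ℝ) → Matrix (Fin 4) (Fin 4) ℝ)
    (ξ : (Fin 4 → ℝ) → Fin 4 → ℝ) (ψ : (Fin 4 → ℝ) → ℝ) : Prop :=
  ∀ (μ ν : Fin 4) (p : Fin 4 → ℝ),
    (∑ l : Fin 4, (ξ p l * pd l (fun q => g q μ ν) p
      + g p l ν * pd μ (fun q => ξ q l) p
      + g p μ l * pd ν (fun q => ξ q l) p)) = 2 * ψ p * g p μ ν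

/-- `ξ` is a Killing vector of the metric `g`. -/
def IsKV (g : (Fin 4 → ℝ) → Matrix (Fin 4) (Fin 4) ℝ)
    (ξ : (Fin 4 → ℝ) → Fin 4 → ℝ) : Prop :=
  ∀ (μ ν : Fin 4) (p : Fin 4 → ℝ),
    (∑ l : Fin 4, (ξ p l * pd l (fun q => g q μ ν) p
      + g p l ν * pd μ (fun q => ξ q l) p
      + g p μ l * pd ν (fun q => ξ q l) p)) = 0

/-- with `C(t) = e^{ψ₀ t}`, the vector field `X₁ = c∂_t + x∂_x + α₁ y∂_y`
is a homothetic Killing vector of the Bianchi I metric with constant conformal factor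
`ψ = c ψ₀`. -/
theorem bianchiI_X1_is_HV (c α₁ ψ₀ : ℝ) (hc : c ≠ 0)
    (C : ℝ → ℝ) (hC : C = fun t => Real.exp (ψ₀ * t))
    (g : (Fin 4 → ℝ) → Matrix (Fin 4) (Fin 4) ℝ)
    (hg : g = fun p => Matrix.diagonal
      ![-(C (p 0)) ^ 2,
        (C (p 0)) ^ 2 * Real.exp (-2 * p 0 / c),
        (C (p 0)) ^ 2 * Real.exp (-2 * α₁ * p 0 / c),
        (C (p 0)) ^ 2])
    (ξ : (Fin 4 → ℝ) → Fin 4 → ℝ)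
    (hξ : ξ = fun p => ![c, p 1, α₁ * p 2, 0]) :
    IsCKV g ξ (fun _ => c * ψ₀) := by
  subst hC hg hξ
  intro μ ν p
  have hexp : HasDerivAt (fun t => Real.exp (ψ₀ * t)) (ψ₀ * Real.exp (ψ₀ * (p 0))) (p 0) := by
    simpa [mul_comm] using ((hasDerivAt_id (p 0)).const_mul ψ₀).exp
  have h00 : HasDerivAt (fun t => -Real.exp (ψ₀ * t) ^ 2)
      (-(2 * ψ₀ * Real.exp (ψ₀ * (p 0)) ^ 2)) (p 0) := by
    have := (hexp.fun_pow 2).fun_neg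
    refine this.congr_deriv ?_
    ring
  have hsq : HasDerivAt (fun t => Real.exp (ψ₀ * t) ^ 2)
      (2 * ψ₀ * Real.exp (ψ₀ * (p 0)) ^ 2) (p 0) := by
    have := hexp.fun_pow 2
    refine this.congr_deriv ?_
    ring
  have hb : HasDerivAt (fun t => Real.exp (-2 * t / c)) ((-2/c) * Real.exp (-2 * (p 0) / c)) (p 0) := by
    have h := ((hasDerivAt_id (p 0)).const_mul (-2/c)).exp
    simp only [id_eq] at h
    have e1 : ∀ t : ℝ, -2/c * t = -2 * t / c := fun t => by ring
    simp only [e1] at h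
    simpa [mul_comm] using h
  have hb2 : HasDerivAt (fun t => Real.exp (-2 * α₁ * t / c)) ((-2*α₁/c) * Real.exp (-2 * α₁ * (p 0) / c)) (p 0) := by
    have h := ((hasDerivAt_id (p 0)).const_mul (-2*α₁/c)).exp
    simp only [id_eq] at h
    have e1 : ∀ t : ℝ, -2*α₁/c * t = -2 * α₁ * t / c := fun t => by ring
    simp only [e1] at h
    simpa [mul_comm] using h
  have h11 : HasDerivAt (fun t => Real.exp (ψ₀ * t) ^ 2 * Real.exp (-2 * t / c))
      ((2*ψ₀ - 2/c) * (Real.exp (ψ₀ * (p 0)) ^ 2 * Real.exp (-2 * (p 0) / c))) (p 0) := by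
    have := hsq.fun_mul hb
    refine this.congr_deriv ?_
    ring
  have h22 : HasDerivAt (fun t => Real.exp (ψ₀ * t) ^ 2 * Real.exp (-2 * α₁ * t / c))
      ((2*ψ₀ - 2*α₁/c) * (Real.exp (ψ₀ * (p 0)) ^ 2 * Real.exp (-2 * α₁ * (p 0) / c))) (p 0) := by
    have := hsq.fun_mul hb2
    refine this.congr_deriv ?_
    ring
  have P00 := fun μ => pd_comp (p := p) μ 0 h00
  have P11 := fun μ => pd_comp (p := p) μ 0 h11
  have P22 := fun μ => pd_comp (p := p) μ 0 h22
  have P33 := fun μ => pd_comp (p := p) μ 0 hsq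
  simp only [neg_mul] at P11 P22
  fin_cases μ <;> fin_cases ν <;>
    simp [Fin.sum_univ_four, Matrix.diagonal_apply, pd_const, pd_coord, pd_cmul,
      P00, P11, P22, P33] <;>
    (try field_simp) <;> ring
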